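/- arXiv:1703.03598 — 2 statements merged into one kernel-verified Lean document; each statement's English description precedes it below -/
import Mathlib

section
/- Let 0 ≤ ρ < 1 and let f ∈ ST_σ(ρ) have Taylor coefficients aₙ. Then: |a₂| ≤ √(2(1−ρ)) if 0 ≤ ρ ≤ 1/2 and |a₂| ≤ 2(1−ρ) if 1/2 ≤ ρ < 1; moreover |a₃| ≤ 2(1−ρ) if 0 ≤ ρ ≤ 1/2 and |a₃| ≤ (1−ρ)(3−2ρ) if 1/2 ≤ ρ < 1. -/
open Metric Set Filter Topology

noncomputable section

private lemma evMem : ball (0:ℂ) 1 ∈ 𝓝 (0:ℂ) := isOpen_ball.mem_nhds (by simp)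

private lemma deriv_mul_on {A B : ℂ → ℂ}
    (hA : AnalyticOnNhd ℂ A (ball 0 1)) (hB : AnalyticOnNhd ℂ B (ball 0 1)) :
    Set.EqOn (deriv (fun z => A z * B z))
      (fun z => deriv A z * B z + A z * deriv B z) (ball 0 1) := fun z hz =>
  deriv_mul (hA z hz).differentiableAt (hB z hz).differentiableAt

private lemma ev_deriv_mul {A B : ℂ → ℂ}
    (hA : AnalyticOnNhd ℂ A (ball 0 1)) (hB : AnalyticOnNhd ℂ B (ball 0 1)) :
    deriv (fun z => A z * B z) =ᶠ[𝓝 0]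
      (fun z => deriv A z * B z + A z * deriv B z) :=
  Filter.eventuallyEq_of_mem evMem (deriv_mul_on hA hB)

private lemma ev_deriv_add {A B : ℂ → ℂ}
    (hA : AnalyticOnNhd ℂ A (ball 0 1)) (hB : AnalyticOnNhd ℂ B (ball 0 1)) :
    deriv (fun z => A z + B z) =ᶠ[𝓝 0] (fun z => deriv A z + deriv B z) :=
  Filter.eventuallyEq_of_mem evMem fun z hz =>
    deriv_add (hA z hz).differentiableAt (hB z hz).differentiableAt

-- test: dslope analytic
private lemma dslope_an {F : ℂ → ℂ} (hF : DifferentiableOn ℂ F (ball 0 1)) :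
    AnalyticOnNhd ℂ (dslope F 0) (ball 0 1) :=
  DifferentiableOn.analyticOnNhd
    ((Complex.differentiableOn_dslope (isOpen_ball.mem_nhds (by simp))).mpr hF) isOpen_ball

private lemma dslope_derivs {F : ℂ → ℂ} (hF : DifferentiableOn ℂ F (ball 0 1))
    (h0 : F 0 = 0) :
    deriv F 0 = dslope F 0 0 ∧
    iteratedDeriv 2 F 0 = 2 * deriv (dslope F 0) 0 ∧
    iteratedDeriv 3 F 0 = 3 * iteratedDeriv 2 (dslope F 0) 0 := by
  set U := dslope F 0 with hU
  have hUan : AnalyticOnNhd ℂ U (ball 0 1) := dslope_an hF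
  have hid : AnalyticOnNhd ℂ (fun z : ℂ => z) (ball 0 1) := fun z _ => analyticAt_id
  have hFU : F = fun z => z * U z := by
    funext z
    have := sub_smul_dslope F 0 z
    simp only [sub_zero, smul_eq_mul, h0] at this
    rw [← this]
  have e1 : deriv F =ᶠ[𝓝 0] fun z => U z + z * deriv U z := by
    rw [hFU]
    refine (ev_deriv_mul hid hUan).trans ?_
    filter_upwards with z
    simp [deriv_id'']
  have e2 : deriv (deriv F) =ᶠ[𝓝 0]
      fun z => 2 * deriv U z + z * deriv (deriv U) z := by
    refine (e1.deriv).trans ?_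
    refine (ev_deriv_add hUan (hid.mul (hUan.deriv))).trans ?_
    have := ev_deriv_mul hid (hUan.deriv)
    filter_upwards [this] with z hz
    rw [hz]
    simp [deriv_id'']
    ring
  have hd2 : iteratedDeriv 2 F 0 = 2 * deriv U 0 := by
    rw [iteratedDeriv_succ, iteratedDeriv_one]
    rw [e2.self_of_nhds]
    simp
  refine ⟨(dslope_same F 0).symm, hd2, ?_⟩
  have e3 : deriv (deriv (deriv F)) =ᶠ[𝓝 0]
      fun z => 3 * deriv (deriv U) z + z * deriv (deriv (deriv U)) z := by
    refine (e2.deriv).trans ?_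
    have hc2 : AnalyticOnNhd ℂ (fun _ : ℂ => (2:ℂ)) (ball 0 1) :=
      fun z _ => analyticAt_const
    refine (ev_deriv_add (hc2.mul hUan.deriv) (hid.mul hUan.deriv.deriv)).trans ?_
    filter_upwards [ev_deriv_mul hc2 hUan.deriv, ev_deriv_mul hid hUan.deriv.deriv]
      with z h1 h2
    rw [h1, h2]
    simp [deriv_id'', deriv_const]
    ring
  have : iteratedDeriv 3 F 0 = deriv (deriv (deriv F)) 0 := by
    rw [show (3:ℕ) = 1+1+1 by rfl, iteratedDeriv_succ, iteratedDeriv_succ, iteratedDeriv_one]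
  rw [this, e3.self_of_nhds]
  rw [iteratedDeriv_succ, iteratedDeriv_one]
  simp

private lemma ratio_facts {F : ℂ → ℂ} (hF : DifferentiableOn ℂ F (ball 0 1))
    (h0 : F 0 = 0) (h1 : deriv F 0 = 1)
    (hne : ∀ z ∈ ball (0:ℂ) 1, z ≠ 0 → F z ≠ 0) :
    ∃ P : ℂ → ℂ, DifferentiableOn ℂ P (ball 0 1) ∧ P 0 = 1 ∧
      (∀ z ∈ ball (0:ℂ) 1, z ≠ 0 → P z = z * deriv F z / F z) ∧
      deriv P 0 = iteratedDeriv 2 F 0 / 2 ∧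
      iteratedDeriv 2 P 0 = (2/3) * iteratedDeriv 3 F 0 - (iteratedDeriv 2 F 0)^2 / 2 := by
  set U := dslope F 0 with hU
  have hUan : AnalyticOnNhd ℂ U (ball 0 1) := dslope_an hF
  have hU0 : U 0 = 1 := by rw [hU, dslope_same, h1]
  have hzU : ∀ z : ℂ, z * U z = F z := by
    intro z
    have := sub_smul_dslope F 0 z
    simpa [h0] using this
  have hUne : ∀ z ∈ ball (0:ℂ) 1, U z ≠ 0 := by
    intro z hz
    rcases eq_or_ne z 0 with rfl | hz0
    · rw [hU0]; exact one_ne_zero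
    · intro hc
      have := hzU z
      rw [hc, mul_zero] at this
      exact hne z hz hz0 this.symm
  have hFan : AnalyticOnNhd ℂ F (ball 0 1) := hF.analyticOnNhd isOpen_ball
  set P : ℂ → ℂ := fun z => deriv F z / U z with hP
  have hPan : AnalyticOnNhd ℂ P (ball 0 1) := (hFan.deriv).div hUan hUne
  have hPU : ∀ z ∈ ball (0:ℂ) 1, deriv F z = P z * U z := by
    intro z hz
    rw [hP]
    field_simp [hUne z hz]
  have hP0 : P 0 = 1 := by rw [hP]; simp [h1, hU0]
  obtain ⟨-, hd2, hd3⟩ := dslope_derivs hF h0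
  rw [← hU] at hd2 hd3
  -- eventual identity
  have e0 : deriv F =ᶠ[𝓝 0] fun z => P z * U z :=
    Filter.eventuallyEq_of_mem evMem hPU
  have e1 : deriv (deriv F) =ᶠ[𝓝 0]
      fun z => deriv P z * U z + P z * deriv U z :=
    e0.deriv.trans (ev_deriv_mul hPan hUan)
  have hD2 : iteratedDeriv 2 F 0 = deriv P 0 + deriv U 0 := by
    have h := e1.self_of_nhds
    simp only [hU0, hP0, mul_one, one_mul] at h
    rw [iteratedDeriv_succ, iteratedDeriv_one, h]
  have e2 : deriv (deriv (deriv F)) =ᶠ[𝓝 0]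
      fun z => (deriv (deriv P) z * U z + deriv P z * deriv U z)
        + (deriv P z * deriv U z + P z * deriv (deriv U) z) := by
    refine e1.deriv.trans ?_
    refine (ev_deriv_add (hPan.deriv.mul hUan) (hPan.mul hUan.deriv)).trans ?_
    filter_upwards [ev_deriv_mul hPan.deriv hUan, ev_deriv_mul hPan hUan.deriv]
      with z p q
    rw [p, q]
  have hD3 : iteratedDeriv 3 F 0
      = iteratedDeriv 2 P 0 + 2 * deriv P 0 * deriv U 0 + iteratedDeriv 2 U 0 := by
    have h := e2.self_of_nhds
    simp only [hU0, hP0, mul_one, one_mul] at h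
    rw [show (3:ℕ) = 1+1+1 by rfl, iteratedDeriv_succ, iteratedDeriv_succ,
      iteratedDeriv_one, h, iteratedDeriv_succ, iteratedDeriv_one,
      iteratedDeriv_succ, iteratedDeriv_one]
    ring
  have hdu : deriv U 0 = iteratedDeriv 2 F 0 / 2 := by
    rw [hd2]; ring
  have hdu2 : iteratedDeriv 2 U 0 = iteratedDeriv 3 F 0 / 3 := by
    rw [hd3]; ring
  have hp1 : deriv P 0 = iteratedDeriv 2 F 0 / 2 := by
    rw [hdu] at hD2; linear_combination -hD2
  refine ⟨P, hPan.differentiableOn, hP0, ?_, hp1, ?_⟩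
  · intro z hz hz0
    rw [hP, ← hzU z]
    field_simp [hUne z hz]
  · rw [hdu, hdu2, hp1] at hD3
    linear_combination (-1 : ℂ) * hD3

private lemma ev_deriv_sub {A B : ℂ → ℂ}
    (hA : AnalyticOnNhd ℂ A (ball 0 1)) (hB : AnalyticOnNhd ℂ B (ball 0 1)) :
    deriv (fun z => A z - B z) =ᶠ[𝓝 0] (fun z => deriv A z - deriv B z) :=
  Filter.eventuallyEq_of_mem evMem fun z hz =>
    deriv_sub (hA z hz).differentiableAt (hB z hz).differentiableAt

private lemma caratheodory {ρ : ℝ} (hρ : ρ < 1) {P : ℂ → ℂ}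
    (hd : DifferentiableOn ℂ P (ball 0 1)) (h0 : P 0 = 1)
    (hre : ∀ z ∈ ball (0:ℂ) 1, ρ < (P z).re) :
    ‖deriv P 0‖ ≤ 2*(1-ρ) ∧
    ‖iteratedDeriv 2 P 0‖ ≤ 4*(1-ρ) := by
  have h0mem : (0:ℂ) ∈ ball (0:ℂ) 1 := by simp
  have hPan : AnalyticOnNhd ℂ P (ball 0 1) := hd.analyticOnNhd isOpen_ball
  set c : ℂ := ((1 - 2*ρ : ℝ) : ℂ) with hc
  set D : ℂ → ℂ := fun z => P z + c with hD
  have hDre : ∀ z ∈ ball (0:ℂ) 1, 1 - ρ < (D z).re := by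
    intro z hz
    have := hre z hz
    simp only [hD, hc, Complex.add_re, Complex.ofReal_re]
    linarith
  have hDne : ∀ z ∈ ball (0:ℂ) 1, D z ≠ 0 := by
    intro z hz hcon
    have := hDre z hz
    rw [hcon] at this
    simp at this
    linarith
  have hDan : AnalyticOnNhd ℂ D (ball 0 1) := hPan.add (fun z _ => analyticAt_const)
  set φ : ℂ → ℂ := fun z => (P z - 1) / D z with hφ
  have hφan : AnalyticOnNhd ℂ φ (ball 0 1) :=
    (hPan.sub (fun z _ => analyticAt_const)).div hDan hDne
  have hφ0 : φ 0 = 0 := by simp [hφ, h0]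
  have hφlt : ∀ z ∈ ball (0:ℂ) 1, ‖φ z‖ < 1 := by
    intro z hz
    have hre' := hre z hz
    have hsq : ‖P z - 1‖ ^ 2 < ‖D z‖ ^ 2 := by
      rw [Complex.sq_norm, Complex.sq_norm]
      simp only [hD, hc, Complex.normSq_apply, Complex.sub_re, Complex.sub_im,
        Complex.add_re, Complex.add_im, Complex.one_re, Complex.one_im,
        Complex.ofReal_re, Complex.ofReal_im]
      nlinarith [hre z hz, hρ]
    have hDpos : 0 < ‖D z‖ := norm_pos_iff.mpr (hDne z hz)
    have habs : ‖P z - 1‖ < ‖D z‖ := by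
      nlinarith [norm_nonneg (P z - 1)]
    rw [hφ]
    simp only [norm_div]
    rw [div_lt_one hDpos]
    exact habs
  have hmaps : MapsTo φ (ball (0:ℂ) 1) (ball (φ 0) 1) := by
    rw [hφ0]
    intro z hz
    simpa [mem_ball_zero_iff] using hφlt z hz
  set ψ : ℂ → ℂ := dslope φ 0 with hψ
  have hψan : AnalyticOnNhd ℂ ψ (ball 0 1) := dslope_an hφan.differentiableOn
  have hψle : ∀ z ∈ ball (0:ℂ) 1, ‖ψ z‖ ≤ 1 := by
    intro z hz
    have := Complex.norm_dslope_le_div_of_mapsTo_ball hφan.differentiableOn (hmaps.mono_right ball_subset_closedBall) hz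
    simpa using this
  set c1 : ℂ := deriv φ 0 with hc1
  have hψ0 : ψ 0 = c1 := dslope_same φ 0
  have hc1le : ‖c1‖ ≤ 1 := by
    have := hψle 0 h0mem
    rwa [hψ0] at this
  set c2 : ℂ := deriv ψ 0 with hc2def
  have hc2 : ‖c2‖ ≤ 1 - ‖c1‖ ^ 2 := by
    rcases lt_or_eq_of_le hc1le with hlt | heq
    · -- Möbius trick
      set E : ℂ → ℂ := fun z => 1 - (starRingEnd ℂ) c1 * ψ z with hE
      have hEne : ∀ z ∈ ball (0:ℂ) 1, E z ≠ 0 := by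
        intro z hz hcon
        have h1 : ‖(starRingEnd ℂ) c1 * ψ z‖ < 1 := by
          rw [norm_mul]
          calc ‖(starRingEnd ℂ) c1‖ * ‖ψ z‖
              ≤ ‖c1‖ * 1 := by
                rw [Complex.norm_conj]
                exact mul_le_mul_of_nonneg_left (hψle z hz) (norm_nonneg _)
            _ < 1 := by rwa [mul_one]
        have : (starRingEnd ℂ) c1 * ψ z = 1 := by
          have := sub_eq_zero.mp hcon
          exact this.symm
        rw [this] at h1
        simp at h1
      have hEan : AnalyticOnNhd ℂ E (ball 0 1) :=
        AnalyticOnNhd.sub (fun z _ => analyticAt_const)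
          (AnalyticOnNhd.mul (fun z _ => analyticAt_const) hψan)
      set χ : ℂ → ℂ := fun z => (ψ z - c1) / E z with hχ
      have hχan : AnalyticOnNhd ℂ χ (ball 0 1) :=
        (hψan.sub (fun z _ => analyticAt_const)).div hEan hEne
      have hχ0 : χ 0 = 0 := by simp [hχ, hψ0]
      have hχle : ∀ z ∈ ball (0:ℂ) 1, ‖χ z‖ ≤ 1 := by
        intro z hz
        have hw : ‖ψ z‖ ^ 2 ≤ 1 := by
          nlinarith [hψle z hz, norm_nonneg (ψ z)]
        have hc1' : ‖c1‖ ^ 2 ≤ 1 := by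
          nlinarith [hc1le, norm_nonneg c1]
        have hsq : ‖ψ z - c1‖ ^ 2 ≤ ‖E z‖ ^ 2 := by
          rw [Complex.sq_norm, Complex.sq_norm]
          rw [Complex.sq_norm] at hw
          rw [Complex.sq_norm] at hc1'
          rw [Complex.normSq_apply] at hw hc1'
          simp only [hE, Complex.normSq_apply, Complex.sub_re, Complex.sub_im,
            Complex.mul_re, Complex.mul_im, Complex.one_re, Complex.one_im,
            Complex.conj_re, Complex.conj_im]
          nlinarith [hw, hc1']
        have hEpos : 0 < ‖E z‖ := norm_pos_iff.mpr (hEne z hz)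
        have habs : ‖ψ z - c1‖ ≤ ‖E z‖ := by
          nlinarith [norm_nonneg (ψ z - c1)]
        rw [hχ]
        simp only [norm_div]
        rw [div_le_one hEpos]
        exact habs
      have hE0 : E 0 = 1 - (Complex.normSq c1 : ℂ) := by
        rw [hE]
        simp only [hψ0]
        rw [Complex.normSq_eq_conj_mul_self]
      have hnsq : Complex.normSq c1 < 1 := by
        have := Complex.sq_norm c1
        nlinarith [hlt, norm_nonneg c1]
      have hE0ne : E 0 ≠ 0 := by
        rw [hE0]
        intro hcon
        have : (Complex.normSq c1 : ℂ) = 1 := by linear_combination -hcon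
        have := congrArg Complex.re this
        simp at this
        linarith
      -- compute deriv χ 0
      have hψdiff : DifferentiableAt ℂ ψ 0 := (hψan 0 h0mem).differentiableAt
      have hnum : DifferentiableAt ℂ (fun z => ψ z - c1) 0 := hψdiff.sub_const _
      have hden : DifferentiableAt ℂ E 0 :=
        (differentiableAt_const _).sub ((differentiableAt_const _).mul hψdiff)
      have hderχ : deriv χ 0 = c2 / (1 - (Complex.normSq c1 : ℂ)) := by
        rw [hχ]
        rw [deriv_fun_div hnum hden (hE0ne)]
        have h1 : deriv (fun z => ψ z - c1) 0 = c2 := by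
          rw [deriv_sub_const]
        have h2 : deriv E 0 = -((starRingEnd ℂ) c1 * c2) := by
          rw [hE]
          rw [deriv_const_sub]
          rw [deriv_const_mul _ hψdiff]
        rw [h1, h2, hψ0, hE0]
        have hne' : (1:ℂ) - (Complex.normSq c1 : ℂ) ≠ 0 := hE0 ▸ hE0ne
        field_simp [hne']
        ring
      have hχbound : ‖deriv χ 0‖ ≤ 1 := by
        refine le_of_forall_pos_le_add ?_
        intro ε hε
        have hmaps' : MapsTo χ (ball (0:ℂ) 1) (ball (χ 0) (1 + ε)) := by
          rw [hχ0]
          intro z hz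
          rw [mem_ball_zero_iff]
          calc ‖χ z‖ ≤ 1 := hχle z hz
            _ < 1 + ε := by linarith
        have := Complex.norm_deriv_le_div_of_mapsTo_ball hχan.differentiableOn (hmaps'.mono_right ball_subset_closedBall) one_pos
        simpa using this
      rw [hderχ] at hχbound
      rw [norm_div] at hχbound
      have habs1 : ‖1 - (Complex.normSq c1 : ℂ)‖ = 1 - Complex.normSq c1 := by
        rw [show (1 : ℂ) - (Complex.normSq c1 : ℂ) = ((1 - Complex.normSq c1 : ℝ) : ℂ) by
          push_cast; ring]
        rw [Complex.norm_real, Real.norm_eq_abs]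
        rw [abs_of_pos (by linarith)]
      rw [habs1] at hχbound
      rw [div_le_one (by linarith)] at hχbound
      rw [Complex.sq_norm]
      exact hχbound
    · -- |c1| = 1 : max modulus, ψ constant
      have hdiffev : ∀ᶠ z in 𝓝 (0:ℂ), DifferentiableAt ℂ ψ z := by
        filter_upwards [evMem] with z hz
        exact (hψan z hz).differentiableAt
      have hmax : IsLocalMax (norm ∘ ψ) 0 := by
        filter_upwards [evMem] with z hz
        simp only [Function.comp_apply]
        rw [hψ0]
        calc ‖ψ z‖ ≤ 1 := hψle z hz
          _ = ‖c1‖ := heq.symm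
      have hev := Complex.eventually_eq_of_isLocalMax_norm hdiffev hmax
      have : deriv ψ 0 = 0 := by
        have heq2 : ψ =ᶠ[𝓝 (0:ℂ)] fun _ => ψ 0 := hev
        rw [heq2.deriv_eq]
        simp
      have hz : ‖c2‖ = 0 := by rw [hc2def, this]; simp
      rw [hz, heq]
      norm_num
  -- now coefficient relations for P
  have hiden : ∀ z ∈ ball (0:ℂ) 1, P z * (1 - φ z) = 1 + c * φ z := by
    intro z hz
    have hφD : φ z * D z = P z - 1 := by
      rw [hφ]
      field_simp [hDne z hz]
    rw [hD] at hφD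
    linear_combination -hφD
  set L : ℂ → ℂ := fun z => P z * (1 - φ z) with hL
  set R : ℂ → ℂ := fun z => 1 + c * φ z with hR
  have honean : AnalyticOnNhd ℂ (fun z : ℂ => 1 - φ z) (ball 0 1) :=
    AnalyticOnNhd.sub (fun z _ => analyticAt_const) hφan
  have hLR : L =ᶠ[𝓝 (0:ℂ)] R := Filter.eventuallyEq_of_mem evMem hiden
  have e1L : deriv L =ᶠ[𝓝 (0:ℂ)]
      fun z => deriv P z * (1 - φ z) - P z * deriv φ z := by
    refine (ev_deriv_mul hPan honean).trans ?_
    refine Filter.eventuallyEq_of_mem evMem fun z hz => ?_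
    have : deriv (fun z => 1 - φ z) z = -deriv φ z := by
      rw [deriv_const_sub]
    rw [this]
    ring
  have e1R : deriv R =ᶠ[𝓝 (0:ℂ)] fun z => c * deriv φ z := by
    refine Filter.eventuallyEq_of_mem evMem fun z hz => ?_
    rw [hR]
    rw [deriv_const_add, deriv_const_mul _ (hφan z hz).differentiableAt]
  have e1 : (fun z => deriv P z * (1 - φ z) - P z * deriv φ z) =ᶠ[𝓝 (0:ℂ)]
      fun z => c * deriv φ z := e1L.symm.trans (hLR.deriv.trans e1R)
  have hP1 : deriv P 0 = (1 + c) * c1 := by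
    have := e1.self_of_nhds
    simp only [hφ0, h0, hc1] at this
    rw [sub_zero, mul_one, one_mul] at this
    linear_combination this
  -- second derivative
  obtain ⟨-, hφd2, -⟩ := dslope_derivs hφan.differentiableOn hφ0
  rw [← hψ, ← hc2def] at hφd2
  have e2 : deriv (fun z => deriv P z * (1 - φ z) - P z * deriv φ z) =ᶠ[𝓝 (0:ℂ)]
      deriv (fun z => c * deriv φ z) := e1.deriv
  have e2L : deriv (fun z => deriv P z * (1 - φ z) - P z * deriv φ z) =ᶠ[𝓝 (0:ℂ)]
      fun z => (deriv (deriv P) z * (1 - φ z) + deriv P z * -deriv φ z)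
        - (deriv P z * deriv φ z + P z * deriv (deriv φ) z) := by
    refine (ev_deriv_sub (hPan.deriv.mul honean) (hPan.mul hφan.deriv)).trans ?_
    filter_upwards [ev_deriv_mul hPan.deriv honean, ev_deriv_mul hPan hφan.deriv]
      with z p q
    rw [p, q, deriv_const_sub]
  have e2R : deriv (fun z => c * deriv φ z) =ᶠ[𝓝 (0:ℂ)]
      fun z => c * deriv (deriv φ) z := by
    refine Filter.eventuallyEq_of_mem evMem fun z hz => ?_
    rw [deriv_const_mul _ ((hφan.deriv) z hz).differentiableAt]
  have hP2 : iteratedDeriv 2 P 0 = 2 * (1 + c) * c1 ^ 2 + (1 + c) * 2 * c2 := by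
    have hfin := (e2L.symm.trans (e2.trans e2R)).self_of_nhds
    simp only [hφ0, h0] at hfin
    have hφ2 : deriv (deriv φ) 0 = 2 * c2 := by
      rw [← hφd2, iteratedDeriv_succ, iteratedDeriv_one]
    rw [hφ2, hP1] at hfin
    rw [iteratedDeriv_succ, iteratedDeriv_one]
    linear_combination hfin
  -- bounds
  have habsc : ‖1 + c‖ = 2 - 2*ρ := by
    rw [hc]
    rw [show (1 : ℂ) + ((1 - 2*ρ : ℝ) : ℂ) = ((2 - 2*ρ : ℝ) : ℂ) by push_cast; ring]
    rw [Complex.norm_real, Real.norm_eq_abs, abs_of_pos (by linarith)]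
  constructor
  · rw [hP1, norm_mul, habsc]
    calc (2 - 2*ρ) * ‖c1‖ ≤ (2 - 2*ρ) * 1 :=
      mul_le_mul_of_nonneg_left hc1le (by linarith)
    _ = 2 * (1 - ρ) := by ring
  · rw [hP2]
    calc ‖2 * (1 + c) * c1 ^ 2 + (1 + c) * 2 * c2‖
        ≤ ‖2 * (1 + c) * c1 ^ 2‖ + ‖(1 + c) * 2 * c2‖ :=
          norm_add_le _ _
      _ = (2 - 2*ρ) * 2 * (‖c1‖ ^ 2) + (2 - 2*ρ) * 2 * ‖c2‖ := by
          simp only [norm_mul, norm_pow, habsc, Complex.norm_two]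
          ring
      _ ≤ (2 - 2*ρ) * 2 * (‖c1‖ ^ 2) + (2 - 2*ρ) * 2 * (1 - ‖c1‖ ^ 2) := by
          have hnn : (0:ℝ) ≤ (2 - 2*ρ) * 2 := by linarith
          nlinarith [hc2]
      _ = 4 * (1 - ρ) := by ring

private lemma g_facts {f g : ℂ → ℂ} {ρ : ℝ} (hρ0 : 0 ≤ ρ)
    (hf : DifferentiableOn ℂ f (ball 0 1)) (hf0 : f 0 = 0) (hf1 : deriv f 0 = 1)
    (hg : DifferentiableOn ℂ g (ball 0 1)) (hinj : Set.InjOn g (ball 0 1))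
    (hfg : ∀ w : ℂ, ‖w‖ < 1/4 → f (g w) = w)
    (hgre : ∀ w ∈ ball (0:ℂ) 1, w ≠ 0 → ρ < (w * deriv g w / g w).re) :
    g 0 = 0 ∧ deriv g 0 = 1 ∧
    iteratedDeriv 2 g 0 = - iteratedDeriv 2 f 0 ∧
    iteratedDeriv 3 g 0 = 3 * (iteratedDeriv 2 f 0)^2 - iteratedDeriv 3 f 0 := by
  have h0mem : (0:ℂ) ∈ ball (0:ℂ) 1 := by simp
  have hgan : AnalyticOnNhd ℂ g (ball 0 1) := hg.analyticOnNhd isOpen_ball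
  have hfan : AnalyticOnNhd ℂ f (ball 0 1) := hf.analyticOnNhd isOpen_ball
  have i2 : ∀ (F : ℂ → ℂ), iteratedDeriv 2 F 0 = deriv (deriv F) 0 := fun F => by
    rw [iteratedDeriv_succ, iteratedDeriv_one]
  have i3 : ∀ (F : ℂ → ℂ), iteratedDeriv 3 F 0 = deriv (deriv (deriv F)) 0 := fun F => by
    rw [show (3:ℕ) = 1+1+1 by rfl, iteratedDeriv_succ, iteratedDeriv_succ, iteratedDeriv_one]
  -- step 1 : g 0 = 0
  have hg0 : g 0 = 0 := by
    by_contra hne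
    have hcont : ContinuousAt g 0 := (hgan 0 h0mem).continuousAt
    have hevne : ∀ᶠ w in 𝓝 (0:ℂ), g w ≠ 0 := hcont.eventually_ne hne
    set h : ℂ → ℂ := fun w => w * deriv g w / g w with hh
    have h00 : h 0 = 0 := by simp [hh]
    have hdiff : ∀ᶠ w in 𝓝 (0:ℂ),
        DifferentiableAt ℂ (fun w => Complex.exp (-(h w))) w := by
      filter_upwards [evMem, hevne] with w hw hne'
      have : DifferentiableAt ℂ h w :=
        (differentiableAt_id.mul (hgan.deriv w hw).differentiableAt).div
          ((hgan w hw).differentiableAt) hne'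
      exact (this.neg).cexp
    have hmax : IsLocalMax (norm ∘ fun w => Complex.exp (-(h w))) 0 := by
      filter_upwards [evMem] with w hw
      simp only [Function.comp_apply, Complex.norm_exp]
      rcases eq_or_ne w 0 with rfl | hw0
      · exact le_refl _
      · have hr := hgre w hw hw0
        rw [h00, neg_zero, Complex.zero_re]
        apply Real.exp_le_exp.mpr
        rw [Complex.neg_re]
        rw [hh]
        simp only
        linarith
    have hev := Complex.eventually_eq_of_isLocalMax_norm hdiff hmax
    have hcomb : ∀ᶠ w in 𝓝[≠] (0:ℂ),
        Complex.exp (-(h w)) = Complex.exp (-(h 0)) ∧ w ∈ ball (0:ℂ) 1 :=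
      ((hev.and evMem).filter_mono nhdsWithin_le_nhds)
    obtain ⟨w, ⟨hw1, hw2⟩, hw0⟩ := (hcomb.and eventually_mem_nhdsWithin).exists
    have hw0' : w ≠ 0 := hw0
    rw [h00, neg_zero, Complex.exp_zero] at hw1
    have habs := congrArg norm hw1
    rw [Complex.norm_exp, norm_one] at habs
    have hre0 : (h w).re = 0 := by
      have h2 : Real.exp ((-(h w)).re) = Real.exp 0 := by rw [habs, Real.exp_zero]
      have := Real.exp_eq_exp.mp h2
      rw [Complex.neg_re] at this
      linarith [this]
    have hr := hgre w hw2 hw0'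
    rw [hh] at hre0
    simp only at hre0
    rw [hre0] at hr
    linarith
  -- step 2 : chain rule relations
  have hcont : ContinuousAt g 0 := (hgan 0 h0mem).continuousAt
  have hmemb : ∀ᶠ w in 𝓝 (0:ℂ), g w ∈ ball (0:ℂ) 1 := by
    have : Tendsto g (𝓝 0) (𝓝 (0:ℂ)) := by
      have := hcont.tendsto
      rwa [hg0] at this
    exact this.eventually_mem evMem
  have hsmall : ∀ᶠ w in 𝓝 (0:ℂ), ‖w‖ < 1/4 := by
    have : ball (0:ℂ) (1/4) ∈ 𝓝 (0:ℂ) := isOpen_ball.mem_nhds (by norm_num)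
    filter_upwards [this] with w hw
    rwa [mem_ball_zero_iff] at hw
  -- helpers
  have hcd : ∀ (F : ℂ → ℂ), AnalyticOnNhd ℂ F (ball 0 1) → ∀ w, w ∈ ball (0:ℂ) 1 →
      g w ∈ ball (0:ℂ) 1 → deriv (fun x => F (g x)) w = deriv F (g w) * deriv g w := by
    intro F hFan w hw hm
    exact deriv_comp w (hFan _ hm).differentiableAt (hgan w hw).differentiableAt
  have hcdiff : ∀ (F : ℂ → ℂ), AnalyticOnNhd ℂ F (ball 0 1) → ∀ w, w ∈ ball (0:ℂ) 1 →
      g w ∈ ball (0:ℂ) 1 → DifferentiableAt ℂ (fun x => F (g x)) w := by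
    intro F hFan w hw hm
    exact ((hFan _ hm).differentiableAt).comp w (hgan w hw).differentiableAt
  have Eid : (fun w => f (g w)) =ᶠ[𝓝 (0:ℂ)] (fun w => w) := by
    filter_upwards [hsmall] with w hw using hfg w hw
  have E1 : deriv (fun w => f (g w)) =ᶠ[𝓝 (0:ℂ)]
      fun w => deriv f (g w) * deriv g w := by
    filter_upwards [evMem, hmemb] with w hw hm using hcd f hfan w hw hm
  have EA : (fun w => deriv f (g w) * deriv g w) =ᶠ[𝓝 (0:ℂ)] fun _ => (1:ℂ) := by
    refine E1.symm.trans (Eid.deriv.trans ?_)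
    refine Filter.Eventually.of_forall fun w => ?_
    exact deriv_id w
  have hg1 : deriv g 0 = 1 := by
    have := EA.self_of_nhds
    simp only [hg0, hf1, one_mul] at this
    exact this
  -- second derivative
  have E2 : deriv (fun w => deriv f (g w) * deriv g w) =ᶠ[𝓝 (0:ℂ)]
      fun w => (deriv (deriv f) (g w) * deriv g w) * deriv g w
        + deriv f (g w) * deriv (deriv g) w := by
    filter_upwards [evMem, hmemb] with w hw hm
    rw [deriv_fun_mul (hcdiff (deriv f) hfan.deriv w hw hm)
      ((hgan.deriv w hw).differentiableAt)]
    rw [hcd (deriv f) hfan.deriv w hw hm]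
  have EB : (fun w => (deriv (deriv f) (g w) * deriv g w) * deriv g w
      + deriv f (g w) * deriv (deriv g) w) =ᶠ[𝓝 (0:ℂ)] fun _ => (0:ℂ) := by
    refine E2.symm.trans (EA.deriv.trans ?_)
    refine Filter.Eventually.of_forall fun w => ?_
    exact deriv_const w 1
  have hd2g : iteratedDeriv 2 g 0 = - iteratedDeriv 2 f 0 := by
    have := EB.self_of_nhds
    simp only [hg0, hg1, hf1, mul_one, one_mul] at this
    rw [i2 g, i2 f]
    linear_combination this
  -- third derivative
  have E3 : deriv (fun w => (deriv (deriv f) (g w) * deriv g w) * deriv g w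
      + deriv f (g w) * deriv (deriv g) w) =ᶠ[𝓝 (0:ℂ)]
      fun w => ((deriv (deriv (deriv f)) (g w) * deriv g w * deriv g w
          + deriv (deriv f) (g w) * deriv (deriv g) w) * deriv g w
        + (deriv (deriv f) (g w) * deriv g w) * deriv (deriv g) w)
        + ((deriv (deriv f) (g w) * deriv g w) * deriv (deriv g) w
          + deriv f (g w) * deriv (deriv (deriv g)) w) := by
    filter_upwards [evMem, hmemb] with w hw hm
    have dg1 : DifferentiableAt ℂ (fun w => deriv g w) w :=
      (hgan.deriv w hw).differentiableAt
    have dg2 : DifferentiableAt ℂ (fun w => deriv (deriv g) w) w :=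
      (hgan.deriv.deriv w hw).differentiableAt
    have dfg1 : DifferentiableAt ℂ (fun x => deriv f (g x)) w :=
      hcdiff (deriv f) hfan.deriv w hw hm
    have dfg2 : DifferentiableAt ℂ (fun x => deriv (deriv f) (g x)) w :=
      hcdiff (deriv (deriv f)) hfan.deriv.deriv w hw hm
    rw [deriv_fun_add ((dfg2.fun_mul dg1).fun_mul dg1) (dfg1.fun_mul dg2)]
    rw [deriv_fun_mul (dfg2.fun_mul dg1) dg1]
    rw [deriv_fun_mul dfg2 dg1]
    rw [deriv_fun_mul dfg1 dg2]
    rw [hcd (deriv (deriv f)) hfan.deriv.deriv w hw hm]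
    rw [hcd (deriv f) hfan.deriv w hw hm]
  have EC : _ =ᶠ[𝓝 (0:ℂ)] (fun _ => (0:ℂ)) := E3.symm.trans (EB.deriv.trans
    (Filter.Eventually.of_forall fun w => deriv_const w 0))
  have hd3g : iteratedDeriv 3 g 0 = 3 * (iteratedDeriv 2 f 0)^2 - iteratedDeriv 3 f 0 := by
    have hfin := EC.self_of_nhds
    simp only [hg0, hg1, hf1, mul_one, one_mul] at hfin
    have h2 : deriv (deriv g) 0 = - deriv (deriv f) 0 := by
      have := hd2g
      rw [i2 g, i2 f] at this
      exact this
    rw [h2] at hfin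
    rw [i3 g, i3 f, i2 f]
    linear_combination hfin
  exact ⟨hg0, hg1, hd2g, hd3g⟩

/-- `f` is bi-univalent on the unit disk, with `g` the univalent analytic
continuation of `f⁻¹` to the unit disk. -/
def IsBiUnivalent (f g : ℂ → ℂ) : Prop :=
  DifferentiableOn ℂ f (ball 0 1) ∧ f 0 = 0 ∧ deriv f 0 = 1 ∧
  Set.InjOn f (ball 0 1) ∧
  DifferentiableOn ℂ g (ball 0 1) ∧ Set.InjOn g (ball 0 1) ∧
  ∀ w : ℂ, ‖w‖ < 1/4 → f (g w) = w

/-- Membership in `ST_σ(ρ)`: bi-starlike of order `ρ`. -/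
def MemSTrho (ρ : ℝ) (f g : ℂ → ℂ) : Prop :=
  IsBiUnivalent f g ∧
  (∀ z ∈ ball (0:ℂ) 1, z ≠ 0 → ρ < (z * deriv f z / f z).re) ∧
  (∀ w ∈ ball (0:ℂ) 1, w ≠ 0 → ρ < (w * deriv g w / g w).re)

theorem stmt_17
    (ρ : ℝ) (f g : ℂ → ℂ) (h : MemSTrho ρ f g)
    (a : ℕ → ℂ) (ha : ∀ n, a n = iteratedDeriv n f 0 / (n.factorial : ℂ))
    (hρ0 : 0 ≤ ρ) (hρ1 : ρ < 1) :
    (ρ ≤ 1/2 → ‖a 2‖ ≤ Real.sqrt (2*(1-ρ))) ∧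
    (1/2 ≤ ρ → ‖a 2‖ ≤ 2*(1-ρ)) ∧
    (ρ ≤ 1/2 → ‖a 3‖ ≤ 2*(1-ρ)) ∧
    (1/2 ≤ ρ → ‖a 3‖ ≤ (1-ρ)*(3-2*ρ)) := by
  obtain ⟨⟨hfd, hf0, hf1, hfinj, hgd, hginj, hfg⟩, hfre, hgre⟩ := h
  have h0mem : (0:ℂ) ∈ ball (0:ℂ) 1 := by simp
  have hfne : ∀ z ∈ ball (0:ℂ) 1, z ≠ 0 → f z ≠ 0 := by
    intro z hz hz0 hc
    exact hz0 (hfinj hz h0mem (by rw [hc, hf0]))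
  obtain ⟨P, hPd, hP0, hPrep, hPd1, hPd2⟩ := ratio_facts hfd hf0 hf1 hfne
  have hPre : ∀ z ∈ ball (0:ℂ) 1, ρ < (P z).re := by
    intro z hz
    rcases eq_or_ne z 0 with rfl | hz0
    · rw [hP0]; simpa using hρ1
    · rw [hPrep z hz hz0]; exact hfre z hz hz0
  obtain ⟨hb1, hb2⟩ := caratheodory hρ1 hPd hP0 hPre
  obtain ⟨hg0, hg1, hd2g, hd3g⟩ := g_facts hρ0 hfd hf0 hf1 hgd hginj hfg hgre
  have hgne : ∀ z ∈ ball (0:ℂ) 1, z ≠ 0 → g z ≠ 0 := by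
    intro z hz hz0 hc
    exact hz0 (hginj hz h0mem (by rw [hc, hg0]))
  obtain ⟨Q, hQd, hQ0, hQrep, hQd1, hQd2⟩ := ratio_facts hgd hg0 hg1 hgne
  have hQre : ∀ z ∈ ball (0:ℂ) 1, ρ < (Q z).re := by
    intro z hz
    rcases eq_or_ne z 0 with rfl | hz0
    · rw [hQ0]; simpa using hρ1
    · rw [hQrep z hz hz0]; exact hgre z hz hz0
  obtain ⟨-, hc2b⟩ := caratheodory hρ1 hQd hQ0 hQre
  set A : ℂ := iteratedDeriv 2 f 0 with hA
  set B : ℂ := iteratedDeriv 3 f 0 with hB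
  set P2 : ℂ := iteratedDeriv 2 P 0 with hP2
  set Q2 : ℂ := iteratedDeriv 2 Q 0 with hQ2
  have hP2v : P2 = (2/3) * B - A^2/2 := hPd2
  have hQ2v : Q2 = (3/2) * A^2 - (2/3) * B := by
    rw [hQd2, hd2g, hd3g]
    ring
  rw [hPd1] at hb1
  have ha2 : a 2 = A / 2 := by
    rw [ha 2]
    norm_num [Nat.factorial]
    rfl
  have ha3 : a 3 = B / 6 := by
    rw [ha 3]
    norm_num [Nat.factorial]
    rfl
  have habs2 : ‖a 2‖ = ‖A‖ / 2 := by
    rw [ha2, norm_div, Complex.norm_two]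
  have habs3 : ‖a 3‖ = ‖B‖ / 6 := by
    rw [ha3, norm_div]
    norm_num
  have hb1' : ‖A‖ / 2 ≤ 2 * (1 - ρ) := by
    have : ‖A/2‖ = ‖A‖ / 2 := by
      rw [norm_div, Complex.norm_two]
    rwa [this] at hb1
  -- |A^2| ≤ 8 (1-ρ)
  have hA2 : ‖A^2‖ ≤ 8 * (1 - ρ) := by
    have hid : A^2 = P2 + Q2 := by rw [hP2v, hQ2v]; ring
    rw [hid]
    calc ‖P2 + Q2‖ ≤ ‖P2‖ + ‖Q2‖ :=
      norm_add_le _ _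
    _ ≤ 4*(1-ρ) + 4*(1-ρ) := add_le_add hb2 hc2b
    _ = 8*(1-ρ) := by ring
  -- |B| ≤ 12 (1-ρ)
  have hBb : ‖B‖ ≤ 12 * (1 - ρ) := by
    have hid : B = (9/4) * P2 + (3/4) * Q2 := by rw [hP2v, hQ2v]; ring
    have h94 : ‖(9/4 : ℂ)‖ = 9/4 := by
      rw [show (9/4:ℂ) = ((9/4:ℝ):ℂ) by norm_num, Complex.norm_real, Real.norm_eq_abs]
      norm_num
    have h34 : ‖(3/4 : ℂ)‖ = 3/4 := by
      rw [show (3/4:ℂ) = ((3/4:ℝ):ℂ) by norm_num, Complex.norm_real, Real.norm_eq_abs]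
      norm_num
    rw [hid]
    calc ‖(9/4) * P2 + (3/4) * Q2‖
        ≤ ‖(9/4 : ℂ) * P2‖ + ‖(3/4 : ℂ) * Q2‖ :=
          norm_add_le _ _
      _ = (9/4) * ‖P2‖ + (3/4) * ‖Q2‖ := by
          rw [norm_mul, norm_mul, h94, h34]
      _ ≤ (9/4) * (4*(1-ρ)) + (3/4) * (4*(1-ρ)) := by
          have h1 : (0:ℝ) ≤ 9/4 := by norm_num
          have h2 : (0:ℝ) ≤ 3/4 := by norm_num
          exact add_le_add (mul_le_mul_of_nonneg_left hb2 h1)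
            (mul_le_mul_of_nonneg_left hc2b h2)
      _ = 12 * (1-ρ) := by ring
  refine ⟨?_, ?_, ?_, ?_⟩
  · intro _
    rw [habs2]
    have hsq : (‖A‖ / 2)^2 ≤ 2*(1-ρ) := by
      have hmp : (‖A‖)^2 = ‖A^2‖ := by rw [norm_pow]
      nlinarith [hA2, hmp]
    have hnn : 0 ≤ ‖A‖ / 2 := by positivity
    exact (Real.le_sqrt hnn (by linarith)).mpr hsq
  · intro _
    rw [habs2]; exact hb1'
  · intro _
    rw [habs3]
    linarith [hBb]
  · intro hhalf
    have hid : a 3 = P2/4 + A^2/8 := by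
      rw [ha3, hP2v]
      ring
    have habsA : ‖A‖ ≤ 4 * (1-ρ) := by linarith [hb1']
    have h4 : ‖(4:ℂ)‖ = 4 := by norm_num
    have h8 : ‖(8:ℂ)‖ = 8 := by norm_num
    calc ‖a 3‖ = ‖P2/4 + A^2/8‖ := by rw [hid]
      _ ≤ ‖P2/4‖ + ‖A^2/8‖ := norm_add_le _ _
      _ = ‖P2‖ / 4 + ‖A‖^2 / 8 := by
          rw [norm_div, norm_div, h4, h8, norm_pow]
      _ ≤ 4*(1-ρ)/4 + (4*(1-ρ))^2/8 := by
          have : ‖A‖^2 ≤ (4*(1-ρ))^2 := by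
            nlinarith [norm_nonneg A, habsA]
          have h2 := hb2
          nlinarith [this, h2]
      _ ≤ (1-ρ)*(3-2*ρ) := by nlinarith [hρ1, hhalf]
end
end

section
/- Let 0 < β ≤ 1 and let f ∈ SS_σ(β) have Taylor coefficients aₙ. Then |a₂| ≤ 2β/√(1+β); moreover |a₃| ≤ β if 0 < β ≤ 1/3 and |a₃| ≤ 4β²/(1+β) if 1/3 ≤ β ≤ 1. -/
open Metric Set

noncomputable section

/-- Membership in `SS_σ(β)`: strongly bi-starlike of order `β`. -/
def MemSSbeta (β : ℝ) (f g : ℂ → ℂ) : Prop :=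
  IsBiUnivalent f g ∧
  (∃ Q : ℂ → ℂ, DifferentiableOn ℂ Q (ball 0 1) ∧ Q 0 = 1 ∧
    (∀ z ∈ ball (0:ℂ) 1, 0 < (Q z).re) ∧
    (∀ z ∈ ball (0:ℂ) 1, z ≠ 0 → z * deriv f z / f z = Q z ^ (β : ℂ))) ∧
  (∃ P : ℂ → ℂ, DifferentiableOn ℂ P (ball 0 1) ∧ P 0 = 1 ∧
    (∀ w ∈ ball (0:ℂ) 1, 0 < (P w).re) ∧
    (∀ w ∈ ball (0:ℂ) 1, w ≠ 0 → w * deriv g w / g w = P w ^ (β : ℂ)))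

section SS18helpers
open Filter Complex Topology

namespace SS18


lemma aderiv {u : ℂ → ℂ} {x : ℂ} (h : AnalyticAt ℂ u x) : AnalyticAt ℂ (deriv u) x := by
  obtain ⟨s, hs, hsa⟩ := h.exists_mem_nhds_analyticOnNhd
  exact hsa.deriv x (mem_of_mem_nhds hs)

lemma evdiff {u : ℂ → ℂ} (h : AnalyticAt ℂ u 0) : ∀ᶠ z in 𝓝 (0:ℂ), DifferentiableAt ℂ u z :=
  h.eventually_analyticAt.mono fun _ h => h.differentiableAt

lemma evan {u : ℂ → ℂ} (h : AnalyticAt ℂ u 0) : ∀ᶠ z in 𝓝 (0:ℂ), AnalyticAt ℂ u z :=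
  h.eventually_analyticAt

lemma deriv_mul_ev {u v : ℂ → ℂ} (hu : AnalyticAt ℂ u 0) (hv : AnalyticAt ℂ v 0) :
    deriv (fun z => u z * v z) =ᶠ[𝓝 (0:ℂ)] fun z => deriv u z * v z + u z * deriv v z := by
  filter_upwards [evdiff hu, evdiff hv] with z h1 h2
  exact deriv_mul h1 h2

lemma deriv_add_ev {u v : ℂ → ℂ} (hu : AnalyticAt ℂ u 0) (hv : AnalyticAt ℂ v 0) :
    deriv (fun z => u z + v z) =ᶠ[𝓝 (0:ℂ)] fun z => deriv u z + deriv v z := by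
  filter_upwards [evdiff hu, evdiff hv] with z h1 h2
  exact deriv_add h1 h2

lemma deriv_comp_ev {u v : ℂ → ℂ} (hu : AnalyticAt ℂ u (v 0)) (hv : AnalyticAt ℂ v 0) :
    deriv (fun z => u (v z)) =ᶠ[𝓝 (0:ℂ)] fun z => deriv u (v z) * deriv v z := by
  have h1 : ∀ᶠ z in 𝓝 (0:ℂ), AnalyticAt ℂ u (v z) :=
    hv.continuousAt.eventually hu.eventually_analyticAt
  filter_upwards [h1, evdiff hv] with z h1 h2
  exact deriv_comp z h1.differentiableAt h2

lemma deriv_div_ev {u v : ℂ → ℂ} (hu : AnalyticAt ℂ u 0) (hv : AnalyticAt ℂ v 0)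
    (hne : ∀ᶠ z in 𝓝 (0:ℂ), v z ≠ 0) :
    deriv (fun z => u z / v z) =ᶠ[𝓝 (0:ℂ)]
      fun z => (deriv u z * v z - u z * deriv v z) / (v z)^2 := by
  filter_upwards [evdiff hu, evdiff hv, hne] with z h1 h2 h3
  exact deriv_div h1 h2 h3

lemma normSq_mobius (a b : ℂ) :
    Complex.normSq (1 - (starRingEnd ℂ) a * b) - Complex.normSq (b - a)
      = (1 - Complex.normSq a) * (1 - Complex.normSq b) := by
  simp only [Complex.normSq_apply, Complex.sub_re, Complex.sub_im, Complex.mul_re,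
    Complex.mul_im, Complex.conj_re, Complex.conj_im, Complex.one_re, Complex.one_im]
  ring

lemma abs_le_abs_of_normSq {w₁ w₂ : ℂ} (h : Complex.normSq w₁ ≤ Complex.normSq w₂) :
    ‖w₁‖ ≤ ‖w₂‖ := by
  rw [Complex.norm_def, Complex.norm_def]
  exact Real.sqrt_le_sqrt h

lemma schwarz_pick {φ : ℂ → ℂ} (hd : DifferentiableOn ℂ φ (ball 0 1))
    (hb : ∀ z ∈ ball (0:ℂ) 1, ‖φ z‖ ≤ 1) :
    ‖deriv φ 0‖ ≤ 1 - ‖φ 0‖^2 := by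
  have h0 : (0:ℂ) ∈ ball (0:ℂ) 1 := mem_ball_self one_pos
  set a := φ 0 with ha_def
  have ha : ‖a‖ ≤ 1 := hb 0 h0
  by_cases hc : ‖a‖ = 1
  · -- maximum modulus: φ constant
    have hmax : IsMaxOn (norm ∘ φ) (ball (0:ℂ) 1) 0 := by
      intro z hz
      show ‖φ z‖ ≤ ‖φ 0‖; rw [← ha_def, hc]; exact hb z hz
    have heq := Complex.eqOn_of_isPreconnected_of_isMaxOn_norm
      (convex_ball (0:ℂ) 1).isPreconnected isOpen_ball hd h0 hmax
    have hev : φ =ᶠ[𝓝 (0:ℂ)] fun _ => a :=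
      Filter.eventuallyEq_of_mem (isOpen_ball.mem_nhds h0) heq
    rw [hev.deriv_eq, deriv_const]
    simp [hc]
  · have hlt : ‖a‖ < 1 := lt_of_le_of_ne ha hc
    have hpos : 0 < 1 - ‖a‖ ^ 2 := by nlinarith [norm_nonneg a]
    set ψ : ℂ → ℂ := fun z => (φ z - a) / (1 - (starRingEnd ℂ) a * φ z) with hψ_def
    have hden : ∀ z ∈ ball (0:ℂ) 1, 1 - (starRingEnd ℂ) a * φ z ≠ 0 := by
      intro z hz h
      have h1 : ‖(starRingEnd ℂ) a * φ z‖ < 1 := by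
        rw [norm_mul, Complex.norm_conj]
        calc ‖a‖ * ‖φ z‖ ≤ ‖a‖ * 1 :=
              mul_le_mul_of_nonneg_left (hb z hz) (norm_nonneg a)
          _ < 1 := by simpa using hlt
      rw [sub_eq_zero] at h
      rw [← h] at h1
      simp at h1
    have hψd : DifferentiableOn ℂ ψ (ball 0 1) := by
      apply DifferentiableOn.div
      · exact hd.sub (differentiableOn_const a)
      · exact (differentiableOn_const 1).sub ((differentiableOn_const _).mul hd)
      · exact hden
    have hψ0 : ψ 0 = 0 := by simp [hψ_def, ha_def]
    have hψb : ∀ z ∈ ball (0:ℂ) 1, ‖ψ z‖ ≤ 1 := by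
      intro z hz
      have key : Complex.normSq (φ z - a) ≤ Complex.normSq (1 - (starRingEnd ℂ) a * φ z) := by
        have h2 : Complex.normSq (φ z) ≤ 1 := by
          rw [← Complex.sq_norm]
          nlinarith [hb z hz, norm_nonneg (φ z)]
        have h3 : Complex.normSq a ≤ 1 := by
          rw [← Complex.sq_norm]; nlinarith [norm_nonneg a]
        nlinarith [normSq_mobius a (φ z)]
      have := abs_le_abs_of_normSq key
      rw [hψ_def]
      simp only [norm_div]
      rw [div_le_one]
      · exact this
      · exact norm_pos_iff.mpr (hden z hz)
    -- derivative bound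
    have hdb : ‖deriv ψ 0‖ ≤ 1 := by
      have hkey : ∀ ε : ℝ, 0 < ε → ‖deriv ψ 0‖ ≤ 1 + ε := by
        intro ε hε
        have hmap : MapsTo ψ (ball (0:ℂ) 1) (ball (ψ 0) (1 + ε)) := by
          intro z hz
          rw [hψ0, mem_ball_zero_iff]
          calc ‖ψ z‖ ≤ 1 := hψb z hz
            _ < 1 + ε := by linarith
        have := Complex.norm_deriv_le_div_of_mapsTo_ball hψd (hmap.mono_right ball_subset_closedBall) one_pos
        simpa using this
      by_contra hcon
      push_neg at hcon
      have := hkey ((‖deriv ψ 0‖ - 1)/2) (by linarith)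
      linarith
    -- compute deriv ψ 0
    have hφ0 : DifferentiableAt ℂ φ 0 := hd.differentiableAt (isOpen_ball.mem_nhds h0)
    have hu : HasDerivAt (fun z => φ z - a) (deriv φ 0) 0 :=
      (hφ0.hasDerivAt).sub_const a
    have hv : HasDerivAt (fun z => 1 - (starRingEnd ℂ) a * φ z)
        (-((starRingEnd ℂ) a * deriv φ 0)) 0 := by
      simpa using ((hφ0.hasDerivAt.const_mul ((starRingEnd ℂ) a)).const_sub 1)
    have hv0 : (1 - (starRingEnd ℂ) a * φ 0) = (1 - Complex.normSq a : ℝ) := by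
      rw [← ha_def]
      push_cast
      rw [← Complex.normSq_eq_conj_mul_self]
    have hv0ne : (1 - (starRingEnd ℂ) a * φ 0) ≠ 0 := hden 0 h0
    have hψd0 : HasDerivAt ψ
        ((deriv φ 0 * (1 - (starRingEnd ℂ) a * φ 0) -
          (φ 0 - a) * (-((starRingEnd ℂ) a * deriv φ 0))) / (1 - (starRingEnd ℂ) a * φ 0)^2) 0 :=
      hu.div hv hv0ne
    have hval : deriv ψ 0 = deriv φ 0 / (1 - (starRingEnd ℂ) a * φ 0) := by
      have hne' : (1 - (starRingEnd ℂ) a * a) ≠ 0 := by rw [ha_def]; exact hv0ne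
      rw [hψd0.deriv, ← ha_def, sub_self, zero_mul, sub_zero, pow_two, ← div_div,
        mul_div_cancel_right₀ _ hne']
    rw [hval] at hdb
    rw [norm_div] at hdb
    have habs : ‖1 - (starRingEnd ℂ) a * φ 0‖ = 1 - ‖a‖ ^ 2 := by
      rw [hv0]
      have h4 : Complex.normSq a ≤ 1 := by
        rw [← Complex.sq_norm]; nlinarith
      rw [Complex.norm_real, Real.norm_eq_abs, _root_.abs_of_nonneg (by linarith), Complex.sq_norm]
    rw [habs, div_le_one hpos] at hdb
    linarith

lemma deriv_dslope {ω : ℂ → ℂ} (h : AnalyticAt ℂ ω 0) :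
    deriv (dslope ω 0) 0 = deriv (deriv ω) 0 / 2 := by
  obtain ⟨p, hp⟩ := h
  have h2 : deriv (dslope ω 0) 0 = p.fslope 1 (fun _ => 1) :=
    hp.has_fpower_series_dslope_fslope.deriv
  have h3 : p.fslope 1 (fun _ => (1:ℂ)) = p.fslope.coeff 1 := rfl
  rw [h2, h3, FormalMultilinearSeries.coeff_fslope]
  obtain ⟨r, hr⟩ := hp
  have h4 := hr.factorial_smul (1:ℂ) 2
  have h5 : iteratedFDeriv ℂ 2 ω 0 (fun _ => (1:ℂ)) = deriv (deriv ω) 0 := by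
    rw [← iteratedDeriv_eq_iteratedFDeriv]
    rw [show (2:ℕ) = 1 + 1 from rfl, iteratedDeriv_succ, iteratedDeriv_one]
  rw [h5] at h4
  have h6 : p.coeff 2 = p 2 (fun _ => (1:ℂ)) := rfl
  rw [h6, ← h4]
  simp [Nat.factorial]

lemma carath {Q : ℂ → ℂ} (hQd : DifferentiableOn ℂ Q (ball 0 1)) (hQ0 : Q 0 = 1)
    (hre : ∀ z ∈ ball (0:ℂ) 1, 0 < (Q z).re) :
    ‖deriv (deriv Q) 0‖ ≤ 4 := by
  have h0 : (0:ℂ) ∈ ball (0:ℂ) 1 := mem_ball_self one_pos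
  have hballn : ball (0:ℂ) 1 ∈ 𝓝 (0:ℂ) := isOpen_ball.mem_nhds h0
  have hQa : AnalyticOnNhd ℂ Q (ball 0 1) := hQd.analyticOnNhd isOpen_ball
  have hQa0 : AnalyticAt ℂ Q 0 := hQa 0 h0
  have hden : ∀ z ∈ ball (0:ℂ) 1, Q z + 1 ≠ 0 := by
    intro z hz h
    have h1 := hre z hz
    have : (Q z).re = -1 := by
      have : Q z = -1 := by linear_combination h
      rw [this]; simp
    linarith
  set ω : ℂ → ℂ := fun z => (Q z - 1) / (Q z + 1) with hω_def
  have hωd : DifferentiableOn ℂ ω (ball 0 1) :=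
    (hQd.sub (differentiableOn_const 1)).div (hQd.add (differentiableOn_const 1)) hden
  have hω0 : ω 0 = 0 := by simp [hω_def, hQ0]
  have hωb : ∀ z ∈ ball (0:ℂ) 1, ‖ω z‖ < 1 := by
    intro z hz
    have key : Complex.normSq (Q z - 1) < Complex.normSq (Q z + 1) := by
      have h1 := hre z hz
      simp only [Complex.normSq_apply, Complex.sub_re, Complex.sub_im, Complex.add_re,
        Complex.add_im, Complex.one_re, Complex.one_im]
      nlinarith
    rw [hω_def]
    simp only [norm_div]
    rw [div_lt_one (norm_pos_iff.mpr (hden z hz))]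
    rw [Complex.norm_def, Complex.norm_def]
    exact Real.sqrt_lt_sqrt (Complex.normSq_nonneg _) key
  have hωa : AnalyticAt ℂ ω 0 := (hωd.analyticOnNhd isOpen_ball) 0 h0
  -- bounds on dslope
  have hmap : MapsTo ω (ball (0:ℂ) 1) (ball (ω 0) 1) := by
    intro z hz
    rw [hω0, mem_ball_zero_iff]
    exact hωb z hz
  have hφb : ∀ z ∈ ball (0:ℂ) 1, ‖dslope ω 0 z‖ ≤ 1 := by
    intro z hz
    have := Complex.norm_dslope_le_div_of_mapsTo_ball hωd (hmap.mono_right ball_subset_closedBall) hz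
    simpa using this
  have hφd : DifferentiableOn ℂ (dslope ω 0) (ball 0 1) := by
    intro z hz
    rcases eq_or_ne z 0 with rfl | hne
    · obtain ⟨p, hp⟩ := hωa
      exact hp.has_fpower_series_dslope_fslope.analyticAt.differentiableAt.differentiableWithinAt
    · exact ((differentiableAt_dslope_of_ne hne).mpr
        ((hωd.analyticOnNhd isOpen_ball z hz).differentiableAt)).differentiableWithinAt
  have hSP := schwarz_pick hφd hφb
  rw [dslope_same, deriv_dslope hωa] at hSP
  set d1 := deriv ω 0 with hd1
  set d2 := deriv (deriv ω) 0 with hd2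
  -- derivative computations
  have hnev : ∀ᶠ z in 𝓝 (0:ℂ), Q z + 1 ≠ 0 := by
    filter_upwards [hballn] with z hz using hden z hz
  have e1 : deriv ω =ᶠ[𝓝 (0:ℂ)] fun z => 2 * deriv Q z / ((Q z + 1)^2) := by
    have e0 : deriv ω =ᶠ[𝓝 (0:ℂ)]
        fun z => (deriv Q z * (Q z + 1) - (Q z - 1) * deriv Q z) / ((Q z + 1)^2) := by
      filter_upwards [evdiff hQa0, hnev] with z h1 h2
      have hu : HasDerivAt (fun z => Q z - 1) (deriv Q z) z := h1.hasDerivAt.sub_const 1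
      have hv : HasDerivAt (fun z => Q z + 1) (deriv Q z) z := h1.hasDerivAt.add_const 1
      exact (hu.div hv h2).deriv
    refine e0.trans (Filter.Eventually.of_forall fun z => ?_)
    congr 1
    ring
  have e2 : deriv (deriv ω) =ᶠ[𝓝 (0:ℂ)]
      fun z => (2 * deriv (deriv Q) z * ((Q z + 1)^2)
        - 2 * deriv Q z * (2 * (Q z + 1) * deriv Q z)) / ((Q z + 1)^2)^2 := by
    refine e1.deriv.trans ?_
    filter_upwards [evdiff hQa0, evdiff (aderiv hQa0), hnev] with z h1 h2 h3
    have hu : HasDerivAt (fun z => 2 * deriv Q z) (2 * deriv (deriv Q) z) z :=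
      h2.hasDerivAt.const_mul 2
    have hv : HasDerivAt (fun z => (Q z + 1)^2) (2 * (Q z + 1) * deriv Q z) z := by
      have := (h1.hasDerivAt.add_const 1).fun_pow 2
      simpa [mul_comm, mul_assoc, mul_left_comm] using this
    have hvne : (Q z + 1)^2 ≠ 0 := pow_ne_zero 2 h3
    exact (hu.div hv hvne).deriv
  have hd1v : d1 = deriv Q 0 / 2 := by
    have := e1.eq_of_nhds
    rw [hd1, this, hQ0]
    norm_num
    ring
  have hd2v : d2 = (deriv (deriv Q) 0 - (deriv Q 0)^2) / 2 := by
    have := e2.eq_of_nhds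
    rw [hd2, this, hQ0]
    have h21 : (1:ℂ) + 1 = 2 := by norm_num
    rw [h21]
    field_simp
  -- conclude
  have hq2 : deriv (deriv Q) 0 = 2 * d2 + 4 * d1^2 := by
    rw [hd1v, hd2v]
    field_simp
    ring
  rw [hq2]
  calc ‖2 * d2 + 4 * d1^2‖
      ≤ ‖2 * d2‖ + ‖4 * d1^2‖ := norm_add_le _ _
    _ = 2 * ‖d2‖ + 4 * ‖d1‖ ^ 2 := by
        simp [map_mul, map_pow]
    _ ≤ 2 * (2 * (1 - ‖d1‖ ^ 2)) + 4 * ‖d1‖ ^ 2 := by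
        have : ‖d2‖ ≤ 2 * (1 - ‖d1‖ ^ 2) := by
          have h := hSP
          rw [norm_div] at h
          simp only [Complex.norm_two] at h
          nlinarith [norm_nonneg d2]
        linarith
    _ = 4 := by ring




lemma side (β : ℝ) {u Q : ℂ → ℂ}
    (hud : DifferentiableOn ℂ u (ball 0 1))
    (hQd : DifferentiableOn ℂ Q (ball 0 1)) (hQ0 : Q 0 = 1)
    (hre : ∀ z ∈ ball (0:ℂ) 1, 0 < (Q z).re)
    (heq : ∀ᶠ z in 𝓝 (0:ℂ), z * deriv u z = u z * (Q z ^ (β:ℂ))) :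
    deriv (deriv u) 0 = 2 * deriv u 0 * ((β:ℂ) * deriv Q 0) ∧
    2 * deriv (deriv (deriv u)) 0 =
      3 * deriv (deriv u) 0 * ((β:ℂ) * deriv Q 0)
      + 3 * deriv u 0 * ((β:ℂ) * (deriv (deriv Q) 0 - (deriv Q 0)^2)
          + (β:ℂ)^2 * (deriv Q 0)^2) := by
  have h0 : (0:ℂ) ∈ ball (0:ℂ) 1 := mem_ball_self one_pos
  have hballn : ball (0:ℂ) 1 ∈ 𝓝 (0:ℂ) := isOpen_ball.mem_nhds h0
  have hua : AnalyticAt ℂ u 0 := (hud.analyticOnNhd isOpen_ball) 0 h0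
  have hQa : AnalyticAt ℂ Q 0 := (hQd.analyticOnNhd isOpen_ball) 0 h0
  have hslit : ∀ᶠ z in 𝓝 (0:ℂ), Q z ∈ slitPlane := by
    filter_upwards [hballn] with z hz
    exact Or.inl (hre z hz)
  have hslit0 : Q 0 ∈ slitPlane := by rw [hQ0]; exact Or.inl (by norm_num)
  set R : ℂ → ℂ := fun z => Q z ^ (β:ℂ) with hR_def
  have hRa : AnalyticAt ℂ R 0 := hQa.cpow analyticAt_const hslit0
  have hR0 : R 0 = 1 := by show Q 0 ^ (β:ℂ) = 1; rw [hQ0, one_cpow]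
  -- derivatives of R
  have eR1 : deriv R =ᶠ[𝓝 (0:ℂ)] fun z => R z * ((β:ℂ) * (deriv Q z / Q z)) := by
    have eR : R =ᶠ[𝓝 (0:ℂ)] fun z => Complex.exp (Complex.log (Q z) * (β:ℂ)) := by
      filter_upwards [hslit] with z hz
      exact cpow_def_of_ne_zero (slitPlane_ne_zero hz) _
    refine eR.deriv.trans ?_
    filter_upwards [evdiff hQa, hslit] with z h1 h2
    have hL : HasDerivAt (fun z => Complex.log (Q z) * (β:ℂ))
        ((deriv Q z / Q z) * (β:ℂ)) z := (h1.hasDerivAt.clog h2).mul_const _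
    refine hL.cexp.deriv.trans ?_
    rw [← cpow_def_of_ne_zero (slitPlane_ne_zero h2)]
    ring
  have eR2 : deriv (deriv R) =ᶠ[𝓝 (0:ℂ)]
      fun z => deriv R z * ((β:ℂ) * (deriv Q z / Q z))
        + R z * ((β:ℂ) * ((deriv (deriv Q) z * Q z - deriv Q z * deriv Q z) / (Q z)^2)) := by
    refine eR1.deriv.trans ?_
    have hQne : ∀ᶠ z in 𝓝 (0:ℂ), Q z ≠ 0 := hslit.mono fun z hz => slitPlane_ne_zero hz
    filter_upwards [evdiff hRa, evdiff hQa, evdiff (aderiv hQa), hQne]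
      with z h1 h3 h4 h5
    have hq : HasDerivAt (fun z => (β:ℂ) * (deriv Q z / Q z))
        ((β:ℂ) * ((deriv (deriv Q) z * Q z - deriv Q z * deriv Q z) / (Q z)^2)) z :=
      ((h4.hasDerivAt.div h3.hasDerivAt h5)).const_mul _
    exact (h1.hasDerivAt.mul hq).deriv
  have hr1 : deriv R 0 = (β:ℂ) * deriv Q 0 := by
    have := eR1.eq_of_nhds
    rw [this, hR0, hQ0]
    simp
  have hr2 : deriv (deriv R) 0
      = (β:ℂ) * (deriv (deriv Q) 0 - (deriv Q 0)^2) + (β:ℂ)^2 * (deriv Q 0)^2 := by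
    have := eR2.eq_of_nhds
    rw [this, hR0, hQ0, hr1]
    simp
    ring
  -- derivative chain for u
  have heq' : (fun z => z * deriv u z) =ᶠ[𝓝 (0:ℂ)] fun z => u z * R z := heq
  have hu1a := aderiv hua
  have hu2a := aderiv hu1a
  have hu3a := aderiv hu2a
  have hR1a := aderiv hRa
  have hR2a := aderiv hR1a
  have lhs1 : deriv (fun z => z * deriv u z) =ᶠ[𝓝 (0:ℂ)]
      fun z => deriv u z + z * deriv (deriv u) z := by
    filter_upwards [evdiff hu1a] with z h1
    exact ((hasDerivAt_id' z).mul h1.hasDerivAt).deriv.trans (by ring)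
  have rhs1 : deriv (fun z => u z * R z) =ᶠ[𝓝 (0:ℂ)]
      fun z => deriv u z * R z + u z * deriv R z := by
    filter_upwards [evdiff hua, evdiff hRa] with z h1 h2
    exact (h1.hasDerivAt.mul h2.hasDerivAt).deriv
  have e1 : (fun z => deriv u z + z * deriv (deriv u) z) =ᶠ[𝓝 (0:ℂ)]
      fun z => deriv u z * R z + u z * deriv R z :=
    lhs1.symm.trans (heq'.deriv.trans rhs1)
  have lhs2 : deriv (fun z => deriv u z + z * deriv (deriv u) z) =ᶠ[𝓝 (0:ℂ)]
      fun z => deriv (deriv u) z + (deriv (deriv u) z + z * deriv (deriv (deriv u)) z) := by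
    filter_upwards [evdiff hu1a, evdiff hu2a] with z h1 h2
    exact (h1.hasDerivAt.add ((hasDerivAt_id' z).mul h2.hasDerivAt)).deriv.trans (by ring)
  have rhs2 : deriv (fun z => deriv u z * R z + u z * deriv R z) =ᶠ[𝓝 (0:ℂ)]
      fun z => (deriv (deriv u) z * R z + deriv u z * deriv R z)
        + (deriv u z * deriv R z + u z * deriv (deriv R) z) := by
    filter_upwards [evdiff hua, evdiff hu1a, evdiff hu2a, evdiff hRa, evdiff hR1a, evdiff hR2a]
      with z h0' h1 h2 h3 h4 h5
    exact ((h1.hasDerivAt.mul h3.hasDerivAt).add (h0'.hasDerivAt.mul h4.hasDerivAt)).deriv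
  have e2 : (fun z => deriv (deriv u) z + (deriv (deriv u) z + z * deriv (deriv (deriv u)) z))
      =ᶠ[𝓝 (0:ℂ)] fun z => (deriv (deriv u) z * R z + deriv u z * deriv R z)
        + (deriv u z * deriv R z + u z * deriv (deriv R) z) :=
    lhs2.symm.trans (e1.deriv.trans rhs2)
  have hu0 : u 0 = 0 := by
    have := heq'.eq_of_nhds
    simp only [zero_mul] at this
    rw [hR0] at this
    simpa using this.symm
  have eq2 : deriv (deriv u) 0 = 2 * deriv u 0 * ((β:ℂ) * deriv Q 0) := by
    have h := e2.eq_of_nhds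
    simp only [hu0, hR0, zero_mul, mul_zero, add_zero, zero_add, mul_one] at h
    rw [hr1] at h
    linear_combination h
  refine ⟨eq2, ?_⟩
  -- third derivative
  have hu4a := aderiv hu3a
  have lhs3 : deriv (fun z => deriv (deriv u) z + (deriv (deriv u) z + z * deriv (deriv (deriv u)) z))
      =ᶠ[𝓝 (0:ℂ)] fun z => deriv (deriv (deriv u)) z + (deriv (deriv (deriv u)) z
        + (deriv (deriv (deriv u)) z + z * deriv (deriv (deriv (deriv u))) z)) := by
    filter_upwards [evdiff hu2a, evdiff hu3a] with z h2 h3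
    exact (h2.hasDerivAt.add (h2.hasDerivAt.add
      ((hasDerivAt_id' z).mul h3.hasDerivAt))).deriv.trans (by ring)
  have rhs3 : deriv (fun z => (deriv (deriv u) z * R z + deriv u z * deriv R z)
        + (deriv u z * deriv R z + u z * deriv (deriv R) z)) =ᶠ[𝓝 (0:ℂ)]
      fun z => ((deriv (deriv (deriv u)) z * R z + deriv (deriv u) z * deriv R z)
          + (deriv (deriv u) z * deriv R z + deriv u z * deriv (deriv R) z))
        + ((deriv (deriv u) z * deriv R z + deriv u z * deriv (deriv R) z)
          + (deriv u z * deriv (deriv R) z + u z * deriv (deriv (deriv R)) z)) := by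
    have hR3a := aderiv hR2a
    filter_upwards [evdiff hua, evdiff hu1a, evdiff hu2a, evdiff hu3a,
      evdiff hRa, evdiff hR1a, evdiff hR2a, evdiff hR3a] with z h0' h1 h2 h3 h4 h5 h6 h7
    exact (((h2.hasDerivAt.mul h4.hasDerivAt).add (h1.hasDerivAt.mul h5.hasDerivAt)).add
      ((h1.hasDerivAt.mul h5.hasDerivAt).add (h0'.hasDerivAt.mul h6.hasDerivAt))).deriv
  have e3 := lhs3.symm.trans (e2.deriv.trans rhs3)
  have h := e3.eq_of_nhds
  simp only [hu0, hR0, zero_mul, mul_zero, add_zero, zero_add, mul_one] at h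
  rw [hr1, hr2] at h
  linear_combination h



lemma compo {f g : ℂ → ℂ}
    (hfd : DifferentiableOn ℂ f (ball 0 1))
    (hgd : DifferentiableOn ℂ g (ball 0 1))
    (hg0 : g 0 = 0)
    (hfg : ∀ᶠ w in 𝓝 (0:ℂ), f (g w) = w) :
    deriv f 0 * deriv g 0 = 1 ∧
    deriv (deriv f) 0 * deriv g 0 * deriv g 0 + deriv f 0 * deriv (deriv g) 0 = 0 ∧
    ((deriv (deriv (deriv f)) 0 * deriv g 0 * deriv g 0
        + deriv (deriv f) 0 * deriv (deriv g) 0) * deriv g 0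
      + deriv (deriv f) 0 * deriv g 0 * deriv (deriv g) 0)
      + (deriv (deriv f) 0 * deriv g 0 * deriv (deriv g) 0
        + deriv f 0 * deriv (deriv (deriv g)) 0) = 0 := by
  have h0 : (0:ℂ) ∈ ball (0:ℂ) 1 := mem_ball_self one_pos
  have hfa : AnalyticAt ℂ f 0 := (hfd.analyticOnNhd isOpen_ball) 0 h0
  have hga : AnalyticAt ℂ g 0 := (hgd.analyticOnNhd isOpen_ball) 0 h0
  have hg1a := aderiv hga
  have hg2a := aderiv hg1a
  have hg3a := aderiv hg2a
  have hgt : Tendsto g (𝓝 (0:ℂ)) (𝓝 (0:ℂ)) := by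
    have := hga.continuousAt.tendsto
    rwa [hg0] at this
  have evf0 : ∀ᶠ w in 𝓝 (0:ℂ), AnalyticAt ℂ f (g w) := hgt.eventually hfa.eventually_analyticAt
  have evf1 : ∀ᶠ w in 𝓝 (0:ℂ), AnalyticAt ℂ (deriv f) (g w) :=
    hgt.eventually (aderiv hfa).eventually_analyticAt
  have evf2 : ∀ᶠ w in 𝓝 (0:ℂ), AnalyticAt ℂ (deriv (deriv f)) (g w) :=
    hgt.eventually (aderiv (aderiv hfa)).eventually_analyticAt
  have evf3 : ∀ᶠ w in 𝓝 (0:ℂ), AnalyticAt ℂ (deriv (deriv (deriv f))) (g w) :=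
    hgt.eventually (aderiv (aderiv (aderiv hfa))).eventually_analyticAt
  have hfg' : (fun w => f (g w)) =ᶠ[𝓝 (0:ℂ)] fun w => w := hfg
  -- first derivative
  have lhs1 : deriv (fun w => f (g w)) =ᶠ[𝓝 (0:ℂ)]
      fun w => deriv f (g w) * deriv g w := by
    filter_upwards [evf0, evdiff hga] with w h1 h2
    exact (h1.differentiableAt.hasDerivAt.comp w h2.hasDerivAt).deriv
  have rhs1 : deriv (fun w : ℂ => w) =ᶠ[𝓝 (0:ℂ)] fun _ => (1:ℂ) :=
    Filter.Eventually.of_forall fun w => deriv_id w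
  have c1 : (fun w => deriv f (g w) * deriv g w) =ᶠ[𝓝 (0:ℂ)] fun _ => (1:ℂ) :=
    lhs1.symm.trans (hfg'.deriv.trans rhs1)
  have e1 : deriv f 0 * deriv g 0 = 1 := by
    have := c1.eq_of_nhds
    rwa [hg0] at this
  refine ⟨e1, ?_, ?_⟩
  · have lhs2 : deriv (fun w => deriv f (g w) * deriv g w) =ᶠ[𝓝 (0:ℂ)]
        fun w => (deriv (deriv f) (g w) * deriv g w) * deriv g w
          + deriv f (g w) * deriv (deriv g) w := by
      filter_upwards [evf1, evdiff hga, evdiff hg1a] with w h1 h2 h3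
      exact ((h1.differentiableAt.hasDerivAt.comp w h2.hasDerivAt).mul h3.hasDerivAt).deriv
    have rhs2 : deriv (fun _ : ℂ => (1:ℂ)) =ᶠ[𝓝 (0:ℂ)] fun _ => (0:ℂ) :=
      Filter.Eventually.of_forall fun w => deriv_const w 1
    have c2 := lhs2.symm.trans (c1.deriv.trans rhs2)
    have := c2.eq_of_nhds
    rwa [hg0] at this
  · have lhs2 : deriv (fun w => deriv f (g w) * deriv g w) =ᶠ[𝓝 (0:ℂ)]
        fun w => (deriv (deriv f) (g w) * deriv g w) * deriv g w
          + deriv f (g w) * deriv (deriv g) w := by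
      filter_upwards [evf1, evdiff hga, evdiff hg1a] with w h1 h2 h3
      exact ((h1.differentiableAt.hasDerivAt.comp w h2.hasDerivAt).mul h3.hasDerivAt).deriv
    have rhs2 : deriv (fun _ : ℂ => (1:ℂ)) =ᶠ[𝓝 (0:ℂ)] fun _ => (0:ℂ) :=
      Filter.Eventually.of_forall fun w => deriv_const w 1
    have c2 := lhs2.symm.trans (c1.deriv.trans rhs2)
    have lhs3 : deriv (fun w => (deriv (deriv f) (g w) * deriv g w) * deriv g w
          + deriv f (g w) * deriv (deriv g) w) =ᶠ[𝓝 (0:ℂ)]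
        fun w => (((deriv (deriv (deriv f)) (g w) * deriv g w) * deriv g w
            + deriv (deriv f) (g w) * deriv (deriv g) w) * deriv g w
          + (deriv (deriv f) (g w) * deriv g w) * deriv (deriv g) w)
          + ((deriv (deriv f) (g w) * deriv g w) * deriv (deriv g) w
            + deriv f (g w) * deriv (deriv (deriv g)) w) := by
      filter_upwards [evf1, evf2, evdiff hga, evdiff hg1a, evdiff hg2a] with w h1 h2 h3 h4 h5
      have T1a : HasDerivAt (fun w => deriv (deriv f) (g w))
          (deriv (deriv (deriv f)) (g w) * deriv g w) w :=
        h2.differentiableAt.hasDerivAt.comp w h3.hasDerivAt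
      have T1 := (T1a.mul h4.hasDerivAt).mul h4.hasDerivAt
      have T2a : HasDerivAt (fun w => deriv f (g w))
          (deriv (deriv f) (g w) * deriv g w) w :=
        h1.differentiableAt.hasDerivAt.comp w h3.hasDerivAt
      have T2 := T2a.mul h5.hasDerivAt
      exact (T1.add T2).deriv
    have rhs3 : deriv (fun _ : ℂ => (0:ℂ)) =ᶠ[𝓝 (0:ℂ)] fun _ => (0:ℂ) :=
      Filter.Eventually.of_forall fun w => deriv_const w 0
    have c3 := lhs3.symm.trans (c2.deriv.trans rhs3)
    have := c3.eq_of_nhds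
    rwa [hg0] at this

end SS18
end SS18helpers

open Filter Complex Topology in
open SS18 in
theorem stmt_18
    (β : ℝ) (f g : ℂ → ℂ) (h : MemSSbeta β f g)
    (a : ℕ → ℂ) (ha : ∀ n, a n = iteratedDeriv n f 0 / (n.factorial : ℂ))
    (hβ0 : 0 < β) (hβ1 : β ≤ 1) :
    ‖a 2‖ ≤ 2*β/Real.sqrt (1+β) ∧
    (β ≤ 1/3 → ‖a 3‖ ≤ β) ∧
    (1/3 ≤ β → ‖a 3‖ ≤ 4*β^2/(1+β)) := by
  obtain ⟨⟨hfd, hf0, hdf1, hfinj, hgd, hginj, hfgiv⟩, ⟨Q, hQd, hQ0, hQre, hQeq⟩,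
    ⟨P, hPd, hP0, hPre, hPeq⟩⟩ := h
  have h0 : (0:ℂ) ∈ ball (0:ℂ) 1 := mem_ball_self one_pos
  have hballn : ball (0:ℂ) 1 ∈ 𝓝 (0:ℂ) := isOpen_ball.mem_nhds h0
  have hga : AnalyticAt ℂ g 0 := (hgd.analyticOnNhd isOpen_ball) 0 h0
  have hPa : AnalyticAt ℂ P 0 := (hPd.analyticOnNhd isOpen_ball) 0 h0
  have hPslit : P 0 ∈ slitPlane := by rw [hP0]; exact Or.inl (by norm_num)
  have hSa : AnalyticAt ℂ (fun w => P w ^ (β:ℂ)) 0 := hPa.cpow analyticAt_const hPslit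
  -- g w ≠ 0 for w ≠ 0 in the ball, plus the cleared identity
  have hPne : ∀ w ∈ ball (0:ℂ) 1, P w ^ (β:ℂ) ≠ 0 := by
    intro w hw hzero
    rw [Complex.cpow_eq_zero_iff] at hzero
    have := hPre w hw
    rw [hzero.1] at this
    simp at this
  have hgne : ∀ w ∈ ball (0:ℂ) 1, w ≠ 0 → g w ≠ 0 := by
    intro w hw hw0 hgw
    have := hPeq w hw hw0
    rw [hgw] at this
    simp at this
    exact hPne w hw this.symm
  have hgval : ∀ w ∈ ball (0:ℂ) 1, w ≠ 0 → w * deriv g w = g w * (P w ^ (β:ℂ)) := by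
    intro w hw hw0
    have h1 := hPeq w hw hw0
    rw [div_eq_iff (hgne w hw hw0)] at h1
    rw [h1]; ring
  -- g 0 = 0 by continuity
  have hg0 : g 0 = 0 := by
    set u : ℂ → ℂ := fun w => w * deriv g w - g w * (P w ^ (β:ℂ)) with hu_def
    have hucont : ContinuousAt u 0 := by
      apply ContinuousAt.sub
      · exact continuousAt_id.mul (aderiv hga).continuousAt
      · exact hga.continuousAt.mul hSa.continuousAt
    have t1 : Tendsto u (𝓝[≠] (0:ℂ)) (𝓝 (u 0)) :=
      hucont.tendsto.mono_left nhdsWithin_le_nhds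
    have t2 : Tendsto u (𝓝[≠] (0:ℂ)) (𝓝 0) := by
      have hev : ∀ᶠ w in 𝓝[≠] (0:ℂ), (fun _ => (0:ℂ)) w = u w := by
        filter_upwards [mem_nhdsWithin_of_mem_nhds hballn, self_mem_nhdsWithin] with w hw hw0
        rw [hu_def]
        simp only
        rw [hgval w hw hw0]
        ring
      exact Tendsto.congr' hev tendsto_const_nhds
    have hu0 : u 0 = 0 := tendsto_nhds_unique t1 t2
    rw [hu_def] at hu0
    simp only [zero_mul, zero_sub, neg_eq_zero] at hu0
    rw [hP0, one_cpow, mul_one] at hu0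
    exact hu0
  -- eventual identities
  have heqf : ∀ᶠ z in 𝓝 (0:ℂ), z * deriv f z = f z * (Q z ^ (β:ℂ)) := by
    filter_upwards [hballn] with z hz
    rcases eq_or_ne z 0 with rfl | hz0
    · rw [hf0]; ring
    · have hfz : f z ≠ 0 := by
        intro hfz
        exact hz0 (hfinj hz h0 (by rw [hfz, hf0]))
      have h1 := hQeq z hz hz0
      rw [div_eq_iff hfz] at h1
      rw [h1]; ring
  have heqg : ∀ᶠ w in 𝓝 (0:ℂ), w * deriv g w = g w * (P w ^ (β:ℂ)) := by
    filter_upwards [hballn] with w hw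
    rcases eq_or_ne w 0 with rfl | hw0
    · rw [hg0]; ring
    · exact hgval w hw hw0
  have hfg : ∀ᶠ w in 𝓝 (0:ℂ), f (g w) = w := by
    have : ball (0:ℂ) (1/4) ∈ 𝓝 (0:ℂ) := isOpen_ball.mem_nhds (mem_ball_self (by norm_num))
    filter_upwards [this] with w hw
    exact hfgiv w (mem_ball_zero_iff.mp hw)
  -- the structural identities
  obtain ⟨sf1, sf2⟩ := side β hfd hQd hQ0 hQre heqf
  obtain ⟨sg1, sg2⟩ := side β hgd hPd hP0 hPre heqg
  obtain ⟨c1, c2, c3⟩ := compo hfd hgd hg0 hfg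
  have hq2b := carath hQd hQ0 hQre
  have hp2b := carath hPd hP0 hPre
  -- names
  set b : ℂ := (β:ℂ) with hb_def
  set q1 : ℂ := deriv Q 0
  set q2 : ℂ := deriv (deriv Q) 0
  set p1 : ℂ := deriv P 0
  set p2 : ℂ := deriv (deriv P) 0
  set A2 : ℂ := deriv (deriv f) 0
  set A3 : ℂ := deriv (deriv (deriv f)) 0
  set B2 : ℂ := deriv (deriv g) 0
  set B3 : ℂ := deriv (deriv (deriv g)) 0
  have hdg1 : deriv g 0 = 1 := by rw [hdf1, one_mul] at c1; exact c1
  rw [hdf1] at sf1 sf2 c2 c3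
  rw [hdg1] at sg1 sg2 c2 c3
  -- coefficient values
  have ha2 : a 2 = A2 / 2 := by
    rw [ha 2]
    norm_num [Nat.factorial]
    rw [show (2:ℕ) = 1 + 1 from rfl, iteratedDeriv_succ, iteratedDeriv_one]
  have ha3 : a 3 = A3 / 6 := by
    rw [ha 3]
    norm_num [Nat.factorial]
    rw [show (3:ℕ) = 1 + 1 + 1 from rfl, iteratedDeriv_succ, iteratedDeriv_succ,
      iteratedDeriv_one]
  -- algebra
  have hE1 : A2 = 2 * (b * q1) := by rw [sf1]; ring
  have hE3 : B2 = 2 * (b * p1) := by rw [sg1]; ring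
  have hE5 : A2 + B2 = 0 := by linear_combination c2
  have hE6 : A3 + 3 * A2 * B2 + B3 = 0 := by linear_combination c3
  have L1 : 8*b*A3 = 9*b*A2^2 - 3*A2^2 + 12*b^2*q2 := by
    linear_combination (4*b)*sf2 + ((3 - 9*b)*A2 + (6*b - 6*b^2)*q1)*hE1
  have L2 : 8*b*B3 = 9*b*B2^2 - 3*B2^2 + 12*b^2*p2 := by
    linear_combination (4*b)*sg2 + ((3 - 9*b)*B2 + (6*b - 6*b^2)*p1)*hE3
  have hB2sq : B2^2 = A2^2 := by linear_combination (B2 - A2)*hE5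
  have hE6' : A3 + B3 = 3*A2^2 := by linear_combination hE6 - 3*A2*hE5
  have hsum : 8*b*(A3 + B3) = 9*b*(A2^2 + B2^2) - 3*(A2^2 + B2^2) + 12*b^2*(q2+p2) := by
    linear_combination L1 + L2
  rw [hB2sq, hE6'] at hsum
  have I1 : (b+1)*A2^2 = 2*b^2*(q2+p2) := by linear_combination (1/6) * hsum
  have hdiff : 8*b*(A3 - B3) = (9*b-3)*(A2^2 - B2^2) + 12*b^2*(q2-p2) := by
    linear_combination L1 - L2
  rw [hB2sq] at hdiff
  have HA3 : 16*b*A3 = 24*b*A2^2 + 12*b^2*(q2-p2) := by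
    linear_combination hdiff + 8*b*hE6'
  have hI2 : 16*b*(b+1)*A3 = 12*b^2*((5*b+1)*q2 + (3*b-1)*p2) := by
    linear_combination (b+1)*HA3 + 24*b*I1
  -- absolute value estimates
  have habsb : ‖b‖ = β := by
    rw [hb_def, Complex.norm_real, Real.norm_eq_abs, _root_.abs_of_pos hβ0]
  have habsb1 : ‖b+1‖ = β + 1 := by
    rw [hb_def, show ((β:ℂ)+1) = ((β+1 : ℝ):ℂ) by push_cast; ring,
      Complex.norm_real, Real.norm_eq_abs, _root_.abs_of_pos (by linarith)]
  have hq2r : ‖q2‖ ≤ 4 := hq2b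
  have hp2r : ‖p2‖ ≤ 4 := hp2b
  have hβ1pos : (0:ℝ) < 1 + β := by linarith
  -- a2 bound
  have hIa2 : 2*(b+1)*(a 2)^2 = b^2*(q2+p2) := by
    rw [ha2]
    linear_combination (1/2)*I1
  have habsq : ‖(a 2)^2‖ = ‖a 2‖^2 := norm_pow _ 2
  have habs2 : 2*(β+1) * ‖a 2‖^2 = β^2 * ‖q2+p2‖ := by
    have h1 := congrArg norm hIa2
    rw [show ((2:ℂ)*(b+1)) = ((2*(β+1):ℝ):ℂ) by rw [hb_def]; push_cast; ring,
      show (b^2 : ℂ) = ((β^2:ℝ):ℂ) by rw [hb_def]; push_cast; ring] at h1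
    rw [norm_mul, norm_mul, Complex.norm_real, Complex.norm_real, Real.norm_eq_abs, Real.norm_eq_abs,
      _root_.abs_of_pos (by linarith : (0:ℝ) < 2*(β+1)),
      _root_.abs_of_pos (by positivity : (0:ℝ) < β^2), habsq] at h1
    exact h1
  have hqp8 : ‖q2 + p2‖ ≤ 8 :=
    le_trans (norm_add_le _ _) (by linarith)
  have ha2sq : ‖a 2‖^2 ≤ 4*β^2/(1+β) := by
    rw [le_div_iff₀ hβ1pos]
    nlinarith [norm_nonneg (q2+p2), sq_nonneg β, norm_nonneg (a 2)]
  have bound1 : ‖a 2‖ ≤ 2*β/Real.sqrt (1+β) := by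
    have h1 : ‖a 2‖ = Real.sqrt (‖a 2‖^2) :=
      (Real.sqrt_sq (norm_nonneg _)).symm
    rw [h1]
    refine (Real.sqrt_le_sqrt ha2sq).trans ?_
    rw [show 4*β^2 = (2*β)^2 by ring, Real.sqrt_div (sq_nonneg (2*β)),
      Real.sqrt_sq (by linarith)]
  -- a3 bound
  have hIa3 : 16*b*(b+1)*(6*(a 3)) = 12*b^2*((5*b+1)*q2 + (3*b-1)*p2) := by
    rw [ha3]
    have hA3a : A3 = 6 * (A3/6) := by ring
    linear_combination hI2
  have habs3 : 96*β*(β+1)*‖a 3‖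
      = 12*β^2*‖(5*b+1)*q2 + (3*b-1)*p2‖ := by
    have h1 := congrArg norm hIa3
    rw [show (16*b*(b+1)*(6*(a 3))) = ((96*β*(β+1):ℝ):ℂ) * (a 3) by
        rw [hb_def]; push_cast; ring,
      show ((12:ℂ)*b^2) = ((12*β^2:ℝ):ℂ) by rw [hb_def]; push_cast; ring] at h1
    rw [norm_mul, norm_mul, Complex.norm_real, Complex.norm_real, Real.norm_eq_abs, Real.norm_eq_abs,
      _root_.abs_of_pos (by positivity : (0:ℝ) < 96*β*(β+1)),
      _root_.abs_of_pos (by positivity : (0:ℝ) < 12*β^2)] at h1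
    exact h1
  have hterm : ‖(5*b+1)*q2 + (3*b-1)*p2‖
      ≤ (5*β+1)*4 + |3*β-1| * 4 := by
    refine le_trans (norm_add_le _ _) ?_
    rw [norm_mul, norm_mul]
    have h5 : ‖5*b+1‖ = 5*β+1 := by
      rw [hb_def, show ((5:ℂ)*β+1) = ((5*β+1 : ℝ):ℂ) by push_cast; ring,
        Complex.norm_real, Real.norm_eq_abs, _root_.abs_of_pos (by linarith)]
    have h6 : ‖3*b-1‖ = |3*β-1| := by
      rw [hb_def, show ((3:ℂ)*β-1) = ((3*β-1 : ℝ):ℂ) by push_cast; ring,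
        Complex.norm_real, Real.norm_eq_abs]
    rw [h5, h6]
    exact add_le_add (mul_le_mul_of_nonneg_left hq2r (by linarith))
      (mul_le_mul_of_nonneg_left hp2r (abs_nonneg _))
  refine ⟨bound1, ?_, ?_⟩
  · intro hβ13
    have habs13 : |3*β-1| = 1 - 3*β := by rw [abs_of_nonpos (by linarith)]; ring
    rw [habs13] at hterm
    have key : 96*β*(β+1)*‖a 3‖ ≤ 12*β^2*((5*β+1)*4 + (1-3*β)*4) := by
      rw [habs3]
      exact mul_le_mul_of_nonneg_left hterm (by positivity)
    have h96 : (0:ℝ) < 96*β*(β+1) := by positivity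
    rw [← mul_le_mul_iff_right₀ h96]
    calc 96*β*(β+1)*‖a 3‖ ≤ 12*β^2*((5*β+1)*4 + (1-3*β)*4) := key
      _ = 96*β*(β+1)*β := by ring
  · intro hβ13
    have habs13 : |3*β-1| = 3*β - 1 := abs_of_nonneg (by linarith)
    rw [habs13] at hterm
    have key : 96*β*(β+1)*‖a 3‖ ≤ 12*β^2*((5*β+1)*4 + (3*β-1)*4) := by
      rw [habs3]
      exact mul_le_mul_of_nonneg_left hterm (by positivity)
    have h96 : (0:ℝ) < 96*β*(β+1) := by positivity
    rw [← mul_le_mul_iff_right₀ h96]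
    calc 96*β*(β+1)*‖a 3‖ ≤ 12*β^2*((5*β+1)*4 + (3*β-1)*4) := key
      _ = 96*β*(β+1)*(4*β^2/(1+β)) := by
          field_simp
          ring
end
end
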